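/- Let q be a prime and n ≥ 1. The set M = { P·((a−b)Iₙ + bJₙ) : P an n×n permutation matrix, a, b ∈ F_q, a ≠ b, a ≠ (1−n)b } is a subgroup of GL(n,q). -/

import Mathlib

open Matrix

section aux
variable {q n : ℕ}

private def Pm (σ : Equiv.Perm (Fin n)) : Matrix (Fin n) (Fin n) (ZMod q) :=
  Matrix.of fun i j => if σ i = j then 1 else 0

private def Jm : Matrix (Fin n) (Fin n) (ZMod q) := Matrix.of fun _ _ => 1

private def Dm (a b : ZMod q) : Matrix (Fin n) (Fin n) (ZMod q) :=
  (a - b) • 1 + b • Jm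

private lemma Pm_one : (Pm 1 : Matrix (Fin n) (Fin n) (ZMod q)) = 1 := by
  ext i j; simp [Pm, Matrix.one_apply]; exact if_congr Iff.rfl rfl rfl

private lemma Pm_mul (σ τ : Equiv.Perm (Fin n)) :
    (Pm σ * Pm τ : Matrix (Fin n) (Fin n) (ZMod q)) = Pm (σ.trans τ) := by
  ext i j
  rw [Matrix.mul_apply]
  simp only [Pm, Matrix.of_apply, Equiv.trans_apply]
  rw [Finset.sum_eq_single (σ i)]
  · simp; exact if_congr Iff.rfl rfl rfl
  · intro k _ hk
    rw [if_neg (Ne.symm hk), zero_mul]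
  · intro h; exact absurd (Finset.mem_univ _) h

private lemma Pm_mul_Jm (σ : Equiv.Perm (Fin n)) :
    (Pm σ * Jm : Matrix (Fin n) (Fin n) (ZMod q)) = Jm := by
  ext i j
  simp [Pm, Jm, Matrix.mul_apply]

private lemma Jm_mul_Pm (σ : Equiv.Perm (Fin n)) :
    (Jm * Pm σ : Matrix (Fin n) (Fin n) (ZMod q)) = Jm := by
  ext i j
  simp [Pm, Jm, Matrix.mul_apply, Equiv.apply_eq_iff_eq_symm_apply]

private lemma Jm_mul_Jm : (Jm * Jm : Matrix (Fin n) (Fin n) (ZMod q)) = (n : ZMod q) • Jm := by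
  ext i j
  simp [Jm, Matrix.mul_apply]

private lemma Dm_one : (Dm 1 0 : Matrix (Fin n) (Fin n) (ZMod q)) = 1 := by
  simp [Dm]

private lemma Pm_Dm_comm (σ : Equiv.Perm (Fin n)) (a b : ZMod q) :
    (Pm σ * Dm a b : Matrix (Fin n) (Fin n) (ZMod q)) = Dm a b * Pm σ := by
  simp [Dm, mul_add, add_mul, Matrix.mul_smul, Matrix.smul_mul, Pm_mul_Jm, Jm_mul_Pm]

private lemma Dm_mul_Dm (a b c d : ZMod q) :
    (Dm a b * Dm c d : Matrix (Fin n) (Fin n) (ZMod q)) =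
      Dm ((a-b)*(c-d) + ((a-b)*d + b*(c-d) + (n : ZMod q)*b*d))
        ((a-b)*d + b*(c-d) + (n : ZMod q)*b*d) := by
  simp only [Dm, mul_add, add_mul, Matrix.smul_mul, Matrix.mul_smul, one_mul, mul_one,
    Jm_mul_Jm, smul_smul]
  module

private lemma inv_coeffs {K : Type*} [Field K] (N a b : K) (hab : a - b ≠ 0)
    (he : a - b + N * b ≠ 0) :
    ∃ c d : K, c - d ≠ 0 ∧ c - (1 - N) * d ≠ 0 ∧
      ((a - b) * d + b * (c - d) + N * b * d = 0) ∧ (a - b) * (c - d) = 1 := by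
  refine ⟨-b * (a - b)⁻¹ * (a - b + N * b)⁻¹ + (a - b)⁻¹,
    -b * (a - b)⁻¹ * (a - b + N * b)⁻¹, ?_, ?_, ?_, ?_⟩
  · simp [inv_ne_zero hab]
  · have : (-b * (a - b)⁻¹ * (a - b + N * b)⁻¹ + (a - b)⁻¹) -
        (1 - N) * (-b * (a - b)⁻¹ * (a - b + N * b)⁻¹) = (a - b + N * b)⁻¹ := by
      field_simp
      have hx : (-b + b * N + a) * (-b + b * N + a)⁻¹ = 1 :=
        mul_inv_cancel₀ (by intro h; apply he; linear_combination h)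
      linear_combination (-1 : K) * hx
    rw [this]
    exact inv_ne_zero he
  · linear_combination (-(b * (a - b)⁻¹)) * mul_inv_cancel₀ he
  · simp [mul_inv_cancel₀ hab]

end aux

theorem stmt9 (q n : ℕ) [Fact (Nat.Prime q)] (hn : 1 ≤ n) :
    ∃ H : Subgroup (GL (Fin n) (ZMod q)),
      ∀ A : GL (Fin n) (ZMod q), A ∈ H ↔
        ∃ (σ : Equiv.Perm (Fin n)) (a b : ZMod q),
          a ≠ b ∧ a ≠ (1 - (n : ZMod q)) * b ∧
          (A : Matrix (Fin n) (Fin n) (ZMod q)) =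
            (Matrix.of fun i j => if σ i = j then (1 : ZMod q) else 0) *
              ((a - b) • (1 : Matrix (Fin n) (Fin n) (ZMod q)) +
                b • Matrix.of fun _ _ => (1 : ZMod q)) := by
  have key : ∀ (σ : Equiv.Perm (Fin n)) (a b : ZMod q),
      (Matrix.of fun i j => if σ i = j then (1 : ZMod q) else 0) *
        ((a - b) • (1 : Matrix (Fin n) (Fin n) (ZMod q)) +
          b • Matrix.of fun _ _ => (1 : ZMod q)) = Pm σ * Dm a b := fun _ _ _ => rfl
  refine ⟨{
    carrier := {A | ∃ (σ : Equiv.Perm (Fin n)) (a b : ZMod q),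
      a ≠ b ∧ a ≠ (1 - (n : ZMod q)) * b ∧
      (A : Matrix (Fin n) (Fin n) (ZMod q)) =
        (Matrix.of fun i j => if σ i = j then (1 : ZMod q) else 0) *
          ((a - b) • (1 : Matrix (Fin n) (Fin n) (ZMod q)) +
            b • Matrix.of fun _ _ => (1 : ZMod q))}
    one_mem' := ?one
    mul_mem' := ?mul
    inv_mem' := ?inv }, fun A => Iff.rfl⟩
  case one =>
    exact ⟨1, 1, 0, one_ne_zero, by simp, by rw [key, Pm_one, Dm_one, one_mul]; rfl⟩
  case mul =>
    rintro A B ⟨σ, a, b, hab, hab', hA⟩ ⟨τ, c, d, hcd, hcd', hB⟩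
    rw [key] at hA hB
    refine ⟨σ.trans τ, (a-b)*(c-d) + ((a-b)*d + b*(c-d) + (n : ZMod q)*b*d),
      (a-b)*d + b*(c-d) + (n : ZMod q)*b*d, ?_, ?_, ?_⟩
    · intro h
      exact mul_ne_zero (sub_ne_zero.mpr hab) (sub_ne_zero.mpr hcd) (by linear_combination h)
    · intro h
      exact mul_ne_zero (sub_ne_zero.mpr hab') (sub_ne_zero.mpr hcd') (by linear_combination h)
    · rw [key, Units.val_mul, hA, hB, ← Pm_mul σ τ, ← Dm_mul_Dm, mul_assoc (Pm σ),
        ← mul_assoc (Dm a b), ← Pm_Dm_comm, mul_assoc (Pm τ), ← mul_assoc (Pm σ)]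
  case inv =>
    rintro A ⟨σ, a, b, hab, hab', hA⟩
    rw [key] at hA
    have hu : a - b ≠ 0 := sub_ne_zero.mpr hab
    have hev : a - b + (n : ZMod q) * b ≠ 0 := by
      intro h; exact sub_ne_zero.mpr hab' (by linear_combination h)
    obtain ⟨c, d, hcd, hcd', h1, h2⟩ := inv_coeffs (n : ZMod q) a b hu hev
    refine ⟨σ⁻¹, c, d, sub_ne_zero.mp hcd, sub_ne_zero.mp hcd', ?_⟩
    have hDD : (Dm a b * Dm c d : Matrix (Fin n) (Fin n) (ZMod q)) = 1 := by
      rw [Dm_mul_Dm, h1, add_zero, h2, Dm_one]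
    have hright : (A : Matrix (Fin n) (Fin n) (ZMod q)) * (Dm c d * Pm σ⁻¹) = 1 := by
      rw [hA, mul_assoc, ← mul_assoc (Dm a b), hDD, one_mul, Pm_mul]
      have hσ : σ.trans σ⁻¹ = 1 := by ext x; simp
      rw [hσ, Pm_one]
    rw [key, Matrix.coe_units_inv, Matrix.inv_eq_right_inv hright, ← Pm_Dm_comm]
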